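/- arXiv:1709.03509 — 3 statements merged into one kernel-verified Lean document; each statement's English description precedes it below -/
import Mathlib

section
/- Let ℓ ∈ ℕ and for j = 1,…,ℓ let c_j ∈ ℝ, b_j > 0, η_j ∈ ℝ, and define f : ℝ → ℝ by f(ω) = Σ_{j=1}^ℓ c_j b_j / (b_j² + (ω − η_j)²). If there exist real numbers a₁ < a₂ such that f(ω) = 0 for all ω ∈ (a₁, a₂), then f(ω) = 0 for every ω ∈ ℝ. -/
/-- **A finite sum of Lorentzians vanishing on an interval vanishes identically.**
If `f(ω) = Σ_{j=1}^ℓ c_j b_j / (b_j² + (ω − η_j)²)` with all `b_j > 0` vanishes on a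
nonempty open interval `(a₁, a₂)`, then it vanishes on all of `ℝ`. -/
theorem sum_lorentzians_eq_zero_of_eq_zero_on_interval
    (ℓ : ℕ) (c b η : Fin ℓ → ℝ) (hb : ∀ j, 0 < b j)
    (f : ℝ → ℝ)
    (hf : ∀ ω, f ω = ∑ j, c j * b j / ((b j) ^ 2 + (ω - η j) ^ 2))
    (a₁ a₂ : ℝ) (ha : a₁ < a₂)
    (hvanish : ∀ ω ∈ Set.Ioo a₁ a₂, f ω = 0) :
    ∀ ω : ℝ, f ω = 0 := by
  have hfe : f = fun ω => ∑ j, c j * b j / ((b j) ^ 2 + (ω - η j) ^ 2) :=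
    funext hf
  have hA : AnalyticOnNhd ℝ f Set.univ := by
    rw [hfe]
    apply Finset.analyticOnNhd_fun_sum
    intro j _
    apply AnalyticOnNhd.div
    · exact analyticOnNhd_const
    · apply AnalyticOnNhd.add analyticOnNhd_const
      exact (analyticOnNhd_id.sub analyticOnNhd_const).pow 2
    · intro x _
      have := hb j
      positivity
  set z : ℝ := (a₁ + a₂) / 2 with hz
  have hzmem : z ∈ Set.Ioo a₁ a₂ := by constructor <;> [skip; skip] <;> simp [hz] <;> linarith
  have hev : f =ᶠ[nhds z] 0 := by
    filter_upwards [Ioo_mem_nhds hzmem.1 hzmem.2] with x hx using hvanish x hx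
  have := hA.eqOn_zero_of_preconnected_of_eventuallyEq_zero
    isPreconnected_univ (Set.mem_univ z) hev
  intro ω
  exact this (Set.mem_univ ω)
end

section
/- Let ℓ ∈ ℕ, ω₀ ∈ ℝ, and for j = 1,…,ℓ let η_j ∈ ℝ, γ_j ≥ 0, λ_j ∈ ℂ. Suppose c : ℝ → ℂ and b_j : ℝ → ℂ (j = 1,…,ℓ) are differentiable functions satisfying, for all t, the linear system c'(t) = −i ω₀ c(t) − i Σ_{j=1}^ℓ λ_j b_j(t) and b_j'(t) = (−i η_j − γ_j/2) b_j(t) − i conj(λ_j) c(t), with b_j(0) = 0 for every j. Then for every t ≥ 0, c'(t) = −i ω₀ c(t) − ∫_0^t K(t − s) c(s) ds, where K(τ) = Σ_{j=1}^ℓ |λ_j|² e^{(−i η_j − γ_j/2) τ}. -/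
open MeasureTheory intervalIntegral

/-- **Memory kernel of the pseudomode construction.** If a two-level amplitude `c`
and pseudomode amplitudes `b_j` satisfy the linear system
`c' = −iω₀ c − i Σ_j λ_j b_j`, `b_j' = (−iη_j − γ_j/2) b_j − i conj(λ_j) c`
with `b_j(0) = 0`, then for all `t ≥ 0` the eliminated dynamics reads
`c'(t) = −iω₀ c(t) − ∫₀ᵗ K(t−s) c(s) ds` with
`K(τ) = Σ_j |λ_j|² e^{(−iη_j − γ_j/2)τ}`. -/
theorem pseudomode_memory_kernel
    (ℓ : ℕ) (ω₀ : ℝ) (η γ : Fin ℓ → ℝ) (hγ : ∀ j, 0 ≤ γ j) (lam : Fin ℓ → ℂ)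
    (c : ℝ → ℂ) (b : Fin ℓ → ℝ → ℂ)
    (hc : ∀ t : ℝ, HasDerivAt c
        (-Complex.I * (ω₀ : ℂ) * c t - Complex.I * ∑ j, lam j * b j t) t)
    (hb : ∀ (j : Fin ℓ) (t : ℝ), HasDerivAt (b j)
        ((-Complex.I * (η j : ℂ) - (γ j : ℂ) / 2) * b j t
          - Complex.I * (starRingEnd ℂ) (lam j) * c t) t)
    (hb0 : ∀ j, b j 0 = 0) :
    ∀ t : ℝ, 0 ≤ t →
      HasDerivAt c
        (-Complex.I * (ω₀ : ℂ) * c t -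
          ∫ s in (0:ℝ)..t,
            (∑ j, ((‖lam j‖ : ℝ) : ℂ) ^ 2 *
              Complex.exp ((-Complex.I * (η j : ℂ) - (γ j : ℂ) / 2) * ((t : ℂ) - s)))
              * c s) t := by
  have hcont : Continuous c := by
    rw [continuous_iff_continuousAt]; exact fun t => (hc t).continuousAt
  set μ : Fin ℓ → ℂ := fun j => -Complex.I * (η j : ℂ) - (γ j : ℂ) / 2 with hμdef
  -- derivative of s ↦ exp(a s) for real s
  have hexp : ∀ (a : ℂ) (s : ℝ), HasDerivAt (fun u : ℝ => Complex.exp (a * (u : ℂ)))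
      (a * Complex.exp (a * (s : ℂ))) s := by
    intro a s
    have h1 := ((hasDerivAt_id ((s : ℝ) : ℂ)).const_mul a).cexp
    have h2 := h1.comp_ofReal
    simpa [mul_comm] using h2
  have hcontexp : ∀ a : ℂ, Continuous fun s : ℝ => Complex.exp (a * (s : ℂ)) :=
    fun a => Complex.continuous_exp.comp (continuous_const.mul Complex.continuous_ofReal)
  -- the explicit solution for b j
  have hbformula : ∀ (j : Fin ℓ) (t : ℝ),
      b j t = -Complex.I * (starRingEnd ℂ) (lam j) *
        (Complex.exp (μ j * t) *
          ∫ s in (0:ℝ)..t, Complex.exp (-(μ j) * (s : ℂ)) * c s) := by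
    intro j t
    have hg : ∀ s : ℝ, HasDerivAt (fun u : ℝ => Complex.exp (-(μ j) * (u : ℂ)) * b j u)
        (Complex.exp (-(μ j) * (s : ℂ)) *
          (-Complex.I * (starRingEnd ℂ) (lam j) * c s)) s := by
      intro s
      have h2 := (hexp (-(μ j)) s).mul (hb j s)
      have heq : (-(μ j)) * Complex.exp (-(μ j) * (s : ℂ)) * b j s +
          Complex.exp (-(μ j) * (s : ℂ)) *
            ((-Complex.I * (η j : ℂ) - (γ j : ℂ) / 2) * b j s
              - Complex.I * (starRingEnd ℂ) (lam j) * c s)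
          = Complex.exp (-(μ j) * (s : ℂ)) *
            (-Complex.I * (starRingEnd ℂ) (lam j) * c s) := by
        rw [hμdef]; ring
      rw [heq] at h2
      exact h2
    have hint : IntervalIntegrable
        (fun s : ℝ => Complex.exp (-(μ j) * (s : ℂ)) *
          (-Complex.I * (starRingEnd ℂ) (lam j) * c s)) volume 0 t :=
      (((hcontexp (-(μ j))).mul (continuous_const.mul hcont))).intervalIntegrable _ _
    have hFTC := intervalIntegral.integral_eq_sub_of_hasDerivAt
      (fun s _ => hg s) hint
    simp only [hb0 j, mul_zero, Complex.ofReal_zero, sub_zero] at hFTC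
    have hconst : (∫ s in (0:ℝ)..t, Complex.exp (-(μ j) * (s : ℂ)) *
          (-Complex.I * (starRingEnd ℂ) (lam j) * c s))
        = -Complex.I * (starRingEnd ℂ) (lam j) *
          ∫ s in (0:ℝ)..t, Complex.exp (-(μ j) * (s : ℂ)) * c s := by
      rw [← intervalIntegral.integral_const_mul]
      congr 1; funext s; ring
    rw [hconst] at hFTC
    have h0 : μ j * t + -(μ j) * t = 0 := by ring
    calc b j t = Complex.exp (μ j * t) * (Complex.exp (-(μ j) * (t : ℂ)) * b j t) := by
            rw [← mul_assoc, ← Complex.exp_add, h0, Complex.exp_zero, one_mul]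
      _ = -Complex.I * (starRingEnd ℂ) (lam j) *
            (Complex.exp (μ j * t) *
              ∫ s in (0:ℝ)..t, Complex.exp (-(μ j) * (s : ℂ)) * c s) := by
            rw [← hFTC]; ring
  intro t _
  -- key identity
  have key : (∫ s in (0:ℝ)..t,
        (∑ j, ((‖lam j‖ : ℝ) : ℂ) ^ 2 *
          Complex.exp ((-Complex.I * (η j : ℂ) - (γ j : ℂ) / 2) * ((t : ℂ) - s))) * c s)
      = Complex.I * ∑ j, lam j * b j t := by
    have hipt : ∀ s : ℝ,
        (∑ j, ((‖lam j‖ : ℝ) : ℂ) ^ 2 *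
          Complex.exp ((-Complex.I * (η j : ℂ) - (γ j : ℂ) / 2) * ((t : ℂ) - s))) * c s
        = ∑ j, (((‖lam j‖ : ℝ) : ℂ) ^ 2 * Complex.exp (μ j * t)) *
            (Complex.exp (-(μ j) * (s : ℂ)) * c s) := by
      intro s
      rw [Finset.sum_mul]
      apply Finset.sum_congr rfl
      intro j _
      simp only [hμdef]
      have hse : (-Complex.I * (η j : ℂ) - (γ j : ℂ) / 2) * ((t : ℂ) - s)
          = (-Complex.I * (η j : ℂ) - (γ j : ℂ) / 2) * t
            + (-(-Complex.I * (η j : ℂ) - (γ j : ℂ) / 2)) * s := by ring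
      rw [hse, Complex.exp_add]; ring
    simp only [hipt]
    rw [intervalIntegral.integral_finset_sum]
    · simp only [intervalIntegral.integral_const_mul]
      rw [Finset.mul_sum]
      apply Finset.sum_congr rfl
      intro j _
      rw [hbformula j t]
      have habs : (((‖lam j‖ : ℝ) : ℂ)) ^ 2 = lam j * (starRingEnd ℂ) (lam j) := by
        rw [← Complex.ofReal_pow, Complex.sq_norm, Complex.mul_conj]
      rw [habs]
      linear_combination (lam j * (starRingEnd ℂ) (lam j) * Complex.exp (μ j * (t : ℂ)) *
        ∫ s in (0:ℝ)..t, Complex.exp (-(μ j) * (s : ℂ)) * c s) * Complex.I_mul_I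
    · intro j _
      exact (continuous_const.mul ((hcontexp (-(μ j))).mul hcont)).intervalIntegrable _ _
  rw [key]
  exact hc t
end

section
/- Let ℓ ≥ 1 and for j = 1,…,ℓ let η_j ∈ ℝ, γ_j ≥ 0, λ_j ∈ ℂ. On the Hilbert space (ℂ²)^{⊗ℓ}, with matrices indexed by configurations x : Fin ℓ → {0,1}, define for each j the lowering operator c_j by (c_j)_{x,y} = 1 if x(j) = 0, y(j) = 1 and x(k) = y(k) for all k ≠ j, and 0 otherwise; let n_j = c_j† c_j, let ρ_vac be the rank-one projector onto the all-zero configuration, and let F = Σ_{j=1}^ℓ λ_j c_j. Let ℒ be the Lindblad generator with Hamiltonian Σ_{j=1}^ℓ η_j n_j, jump operators c_j and rates γ_j: ℒ(ρ) = −i[Σ_j η_j n_j, ρ] + Σ_j γ_j (c_j ρ c_j† − ½{n_j, ρ}). Then for every t ∈ ℝ, Tr( F · exp(tℒ)( F† ρ_vac ) ) = Σ_{j=1}^ℓ |λ_j|² e^{(−i η_j − γ_j/2) t}. -/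
open scoped Matrix

attribute [local instance] Matrix.linftyOpNormedAddCommGroup Matrix.linftyOpNormedSpace

/-- The Lindblad (GKLS) generator
`ℒ(ρ) = −i[H,ρ] + Σ_j γ_j (L_j ρ L_j† − ½{L_j†L_j, ρ})`
as a linear endomorphism of the matrix space. -/
noncomputable def lindbladGen {d : Type*} [Fintype d] [DecidableEq d]
    {J : Type*} [Fintype J] (H : Matrix d d ℂ) (L : J → Matrix d d ℂ) (γ : J → ℝ) :
    Matrix d d ℂ →ₗ[ℂ] Matrix d d ℂ :=
  (-Complex.I) • (LinearMap.mulLeft ℂ H - LinearMap.mulRight ℂ H)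
    + ∑ j, (γ j : ℂ) •
        ((LinearMap.mulRight ℂ (L j)ᴴ).comp (LinearMap.mulLeft ℂ (L j))
          - (2⁻¹ : ℂ) • (LinearMap.mulLeft ℂ ((L j)ᴴ * L j)
              + LinearMap.mulRight ℂ ((L j)ᴴ * L j)))

/-- The quantum dynamical semigroup `exp(tℒ)`, the exponential of the Lindblad
generator taken in the algebra of (continuous) linear endomorphisms. -/
noncomputable def lindbladSemigroup {d : Type*} [Fintype d] [DecidableEq d]
    {J : Type*} [Fintype J] (H : Matrix d d ℂ) (L : J → Matrix d d ℂ) (γ : J → ℝ)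
    (t : ℝ) : Matrix d d ℂ →L[ℂ] Matrix d d ℂ :=
  letI : IsTopologicalRing (Matrix d d ℂ →L[ℂ] Matrix d d ℂ) :=
    letI : NormedRing (Matrix d d ℂ →L[ℂ] Matrix d d ℂ) := ContinuousLinearMap.toNormedRing
    NonUnitalSeminormedRing.toIsTopologicalRing
  NormedSpace.exp ((t : ℂ) • (lindbladGen H L γ).toContinuousLinearMap)

/-- The lowering operator of the `j`-th two-level mode on `(ℂ²)^{⊗ℓ}`, with matrices
indexed by configurations `x : Fin ℓ → Fin 2`. -/
noncomputable def lower (ℓ : ℕ) (j : Fin ℓ) :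
    Matrix (Fin ℓ → Fin 2) (Fin ℓ → Fin 2) ℂ :=
  Matrix.of fun x y =>
    if x j = 0 ∧ y j = 1 ∧ ∀ k, k ≠ j → x k = y k then 1 else 0

/-- The projector onto the all-zero (vacuum) configuration. -/
noncomputable def vacProj (ℓ : ℕ) :
    Matrix (Fin ℓ → Fin 2) (Fin ℓ → Fin 2) ℂ :=
  Matrix.of fun x y =>
    if x = (fun _ => (0 : Fin 2)) ∧ y = (fun _ => (0 : Fin 2)) then 1 else 0

/- ### Auxiliary material -/

/-- If `v` is an eigenvector of `A` with eigenvalue `c`, then it is an eigenvector of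
`exp A` with eigenvalue `exp c`. -/
lemma exp_eigen {X : Type*} [NormedAddCommGroup X] [NormedSpace ℂ X] [CompleteSpace X]
    (A : X →L[ℂ] X) (c : ℂ) (v : X) (h : A v = c • v) :
    NormedSpace.exp A v = Complex.exp c • v := by
  have hpow : ∀ n : ℕ, (A ^ n) v = c ^ n • v := by
    intro n; induction n with
    | zero => simp
    | succ n ih =>
        rw [pow_succ, pow_succ, ContinuousLinearMap.mul_apply, h, map_smul, ih,
          smul_smul, mul_comm c]
  have hs : Summable fun n : ℕ => ((n.factorial : ℂ))⁻¹ • A ^ n :=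
    NormedSpace.expSeries_summable' A
  have hc : Summable fun n : ℕ => ((n.factorial : ℂ))⁻¹ * c ^ n := by
    simpa [smul_eq_mul] using NormedSpace.expSeries_summable' (𝕂 := ℂ) c
  rw [NormedSpace.exp_eq_tsum (𝕂 := ℂ)]
  have := (ContinuousLinearMap.apply ℂ X v).map_tsum hs
  simp only [ContinuousLinearMap.apply_apply] at this
  rw [this]
  simp only [ContinuousLinearMap.smul_apply, hpow, smul_smul]
  rw [Summable.tsum_smul_const hc, Complex.exp_eq_exp_ℂ, NormedSpace.exp_eq_tsum (𝕂 := ℂ)]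
  simp [smul_eq_mul]

/-- The all-zero configuration. -/
def zc (ℓ : ℕ) : Fin ℓ → Fin 2 := fun _ => 0

/-- The configuration with a single excitation at site `j`. -/
def ec (ℓ : ℕ) (j : Fin ℓ) : Fin ℓ → Fin 2 := fun k => if k = j then 1 else 0

/-- The matrix unit `|e_j⟩⟨0|`. -/
noncomputable def EM (ℓ : ℕ) (j : Fin ℓ) :
    Matrix (Fin ℓ → Fin 2) (Fin ℓ → Fin 2) ℂ :=
  Matrix.of fun x y => if x = ec ℓ j ∧ y = zc ℓ then 1 else 0

@[simp] lemma lit_zc (ℓ : ℕ) : (fun _ : Fin ℓ => (0:Fin 2)) = zc ℓ := rfl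

lemma vac_apply (ℓ : ℕ) (x y : Fin ℓ → Fin 2) :
    vacProj ℓ x y = if x = zc ℓ ∧ y = zc ℓ then 1 else 0 := rfl

lemma B1 (ℓ : ℕ) (k : Fin ℓ) (x : Fin ℓ → Fin 2) : lower ℓ k x (zc ℓ) = 0 := by
  simp [lower, zc]

lemma B2 (ℓ : ℕ) (j : Fin ℓ) (x : Fin ℓ → Fin 2) :
    lower ℓ j (zc ℓ) x = if x = ec ℓ j then 1 else 0 := by
  simp only [lower, Matrix.of_apply, zc]
  congr 1
  simp only [eq_self_iff_true, true_and, eq_iff_iff]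
  constructor
  · rintro ⟨h1, h2⟩
    funext k
    by_cases hk : k = j
    · subst hk; simpa [ec] using h1
    · simp [ec, hk, (h2 k hk).symm]
  · rintro rfl
    refine ⟨by simp [ec], fun k hk => by simp [ec, hk]⟩

lemma B3 (ℓ : ℕ) (k j : Fin ℓ) (x : Fin ℓ → Fin 2) :
    lower ℓ k x (ec ℓ j) = if k = j ∧ x = zc ℓ then 1 else 0 := by
  simp only [lower, Matrix.of_apply]
  congr 1
  simp only [eq_iff_iff]
  constructor
  · rintro ⟨h1, h2, h3⟩
    have hkj : k = j := by
      by_contra hkj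
      simp [ec, hkj] at h2
    subst hkj
    refine ⟨rfl, ?_⟩
    funext m
    by_cases hm : m = k
    · subst hm; simpa [zc] using h1
    · have := h3 m hm; simp [ec, hm] at this; simpa [zc] using this
  · rintro ⟨rfl, rfl⟩
    refine ⟨rfl, by simp [ec], fun m hm => by simp [ec, zc, hm]⟩

lemma M1 (ℓ : ℕ) (j : Fin ℓ) : (lower ℓ j)ᴴ * vacProj ℓ = EM ℓ j := by
  ext x y
  rw [Matrix.mul_apply, Finset.sum_eq_single (zc ℓ)]
  · simp only [Matrix.conjTranspose_apply, B2, vacProj, EM, Matrix.of_apply, zc,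
      apply_ite (starRingEnd ℂ), map_one, map_zero]
    by_cases hx : x = ec ℓ j <;> by_cases hy : y = zc ℓ <;>
      simp [hx, hy, lit_zc]
  · intro z _ hz
    have : ¬ (z = zc ℓ ∧ y = zc ℓ) := by
      rintro ⟨rfl, -⟩; exact hz rfl
    simp [vac_apply, this]
  · simp

lemma M2 (ℓ : ℕ) (k j : Fin ℓ) :
    lower ℓ k * EM ℓ j = if k = j then vacProj ℓ else 0 := by
  ext x y
  rw [Matrix.mul_apply, Finset.sum_eq_single (ec ℓ j)]
  · rw [B3]
    by_cases hkj : k = j <;> by_cases hx : x = zc ℓ <;>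
      by_cases hy : y = zc ℓ <;>
      simp [hkj, hx, hy, EM, vac_apply]
  · intro z _ hz
    have : ¬ (z = ec ℓ j ∧ y = zc ℓ) := by rintro ⟨rfl, -⟩; exact hz rfl
    simp [EM, this]
  · simp

lemma M3 (ℓ : ℕ) (j k : Fin ℓ) : EM ℓ j * (lower ℓ k)ᴴ = 0 := by
  ext x y
  rw [Matrix.mul_apply]
  apply Finset.sum_eq_zero
  intro z _
  simp [EM, Matrix.conjTranspose_apply]
  rintro - rfl
  simp [B1]

lemma M4 (ℓ : ℕ) (k : Fin ℓ) : vacProj ℓ * (lower ℓ k)ᴴ = 0 := by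
  ext x y
  rw [Matrix.mul_apply]
  apply Finset.sum_eq_zero
  intro z _
  simp [vac_apply, Matrix.conjTranspose_apply]
  rintro - rfl
  simp [B1 ℓ k y]

lemma M5 (ℓ : ℕ) : (vacProj ℓ).trace = 1 := by
  simp [Matrix.trace, Matrix.diag, vacProj, and_self]

lemma N1 (ℓ : ℕ) (k j : Fin ℓ) :
    ((lower ℓ k)ᴴ * lower ℓ k) * EM ℓ j = if k = j then EM ℓ j else 0 := by
  rw [mul_assoc, M2]
  split_ifs with h
  · subst h; rw [M1]
  · rw [mul_zero]

lemma N2 (ℓ : ℕ) (j k : Fin ℓ) :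
    EM ℓ j * ((lower ℓ k)ᴴ * lower ℓ k) = 0 := by
  rw [← mul_assoc, M3, zero_mul]

lemma N3 (ℓ : ℕ) (k j : Fin ℓ) :
    (lower ℓ k * EM ℓ j) * (lower ℓ k)ᴴ = 0 := by
  rw [M2]
  split_ifs with h
  · exact M4 ℓ k
  · rw [zero_mul]

lemma gen_eig (ℓ : ℕ) (j : Fin ℓ) (η γ : Fin ℓ → ℝ) :
    lindbladGen (∑ k, (η k : ℂ) • ((lower ℓ k)ᴴ * lower ℓ k)) (lower ℓ) γ (EM ℓ j)
      = (-Complex.I * (η j : ℂ) - (γ j : ℂ) / 2) • EM ℓ j := by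
  have hH : (∑ k, (η k : ℂ) • ((lower ℓ k)ᴴ * lower ℓ k)) * EM ℓ j
      = (η j : ℂ) • EM ℓ j := by
    rw [Finset.sum_mul, Finset.sum_eq_single j]
    · rw [smul_mul_assoc, N1]; simp
    · intro k _ hk; rw [smul_mul_assoc, N1]; simp [hk]
    · simp
  have hH2 : EM ℓ j * (∑ k, (η k : ℂ) • ((lower ℓ k)ᴴ * lower ℓ k)) = 0 := by
    rw [Finset.mul_sum]
    exact Finset.sum_eq_zero fun k _ => by rw [mul_smul_comm, N2, smul_zero]
  simp only [lindbladGen, LinearMap.add_apply, LinearMap.smul_apply, LinearMap.sub_apply,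
    LinearMap.sum_apply, LinearMap.comp_apply, LinearMap.mulLeft_apply, LinearMap.mulRight_apply]
  rw [hH, hH2, Finset.sum_eq_single j]
  · rw [N3, N1, N2, if_pos rfl]
    simp only [sub_zero, add_zero, zero_sub, smul_neg, smul_smul, neg_smul]
    rw [← neg_smul, ← add_smul]
    congr 1
  · intro k _ hk
    rw [N3, N1, N2, if_neg hk]
    simp
  · simp

lemma trace_F_EM (ℓ : ℕ) (lam : Fin ℓ → ℂ) (j : Fin ℓ) :
    ((∑ k, lam k • lower ℓ k) * EM ℓ j).trace = lam j := by
  rw [Finset.sum_mul, Matrix.trace_sum, Finset.sum_eq_single j]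
  · rw [smul_mul_assoc, M2, if_pos rfl]; simp [M5]
  · intro k _ hk; rw [smul_mul_assoc, M2, if_neg hk]; simp
  · simp

/-- **Two-time correlation function of `ℓ` independent damped pseudomodes.**
With `F = Σ_j λ_j c_j` and the Lindblad generator with Hamiltonian `Σ_j η_j c_j†c_j`,
jump operators `c_j` and rates `γ_j ≥ 0`, the vacuum correlation function is
`Tr(F · exp(tℒ)(F† ρ_vac)) = Σ_j |λ_j|² e^{(−iη_j − γ_j/2)t}`. -/
theorem damped_pseudomodes_correlation
    (ℓ : ℕ) (hℓ : 1 ≤ ℓ) (η γ : Fin ℓ → ℝ) (hγ : ∀ j, 0 ≤ γ j) (lam : Fin ℓ → ℂ)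
    (t : ℝ) :
    ((∑ j, lam j • lower ℓ j) *
        lindbladSemigroup (∑ j, (η j : ℂ) • ((lower ℓ j)ᴴ * lower ℓ j)) (lower ℓ) γ t
          ((∑ j, lam j • lower ℓ j)ᴴ * vacProj ℓ)).trace =
      ∑ j, ((‖lam j‖ : ℝ) : ℂ) ^ 2 *
        Complex.exp ((-Complex.I * (η j : ℂ) - (γ j : ℂ) / 2) * (t : ℂ)) := by
  classical
  set H : Matrix (Fin ℓ → Fin 2) (Fin ℓ → Fin 2) ℂ :=
    ∑ k, (η k : ℂ) • ((lower ℓ k)ᴴ * lower ℓ k) with hHdef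
  have key : ∀ j : Fin ℓ,
      lindbladSemigroup H (lower ℓ) γ t (EM ℓ j)
        = Complex.exp ((-Complex.I * (η j : ℂ) - (γ j : ℂ) / 2) * (t : ℂ)) • EM ℓ j := by
    intro j
    have heig : ((t : ℂ) • (lindbladGen H (lower ℓ) γ).toContinuousLinearMap) (EM ℓ j)
        = ((-Complex.I * (η j : ℂ) - (γ j : ℂ) / 2) * (t : ℂ)) • EM ℓ j := by
      rw [ContinuousLinearMap.smul_apply]
      rw [show ((lindbladGen H (lower ℓ) γ).toContinuousLinearMap) (EM ℓ j)
            = (lindbladGen H (lower ℓ) γ) (EM ℓ j) from rfl]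
      rw [hHdef, gen_eig, smul_smul, mul_comm]
    rw [lindbladSemigroup]
    exact exp_eigen _ _ _ heig
  have harg : (∑ j, lam j • lower ℓ j)ᴴ * vacProj ℓ
      = ∑ j, (starRingEnd ℂ) (lam j) • EM ℓ j := by
    rw [Matrix.conjTranspose_sum, Finset.sum_mul]
    refine Finset.sum_congr rfl fun j _ => ?_
    rw [Matrix.conjTranspose_smul, smul_mul_assoc, M1]
    rfl
  rw [harg, map_sum]
  simp only [map_smul, key]
  rw [Finset.mul_sum, Matrix.trace_sum]
  refine Finset.sum_congr rfl fun j _ => ?_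
  rw [mul_smul_comm, mul_smul_comm, Matrix.trace_smul, Matrix.trace_smul, trace_F_EM]
  have habs : (((‖lam j‖ : ℝ) : ℂ)) ^ 2 = (starRingEnd ℂ) (lam j) * lam j := by
    have h1 : (((‖lam j‖ : ℝ) : ℂ)) ^ 2 = ((‖lam j‖ ^ 2 : ℝ) : ℂ) := by
      push_cast; ring
    rw [h1, Complex.sq_norm, ← Complex.mul_conj, mul_comm]
  rw [habs]
  simp [smul_eq_mul]
  ring
end
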